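/- arXiv:1507.03535 — 2 statements merged into one kernel-verified Lean document; each statement's English description precedes it below -/
import Mathlib

section
/- Let K be a field equipped with a nonarchimedean absolute value |·|, and let λ₁, λ₂, λ₃ ∈ K, each different from 1, satisfy the fixed-point residue formula. Suppose |λ₁| ≤ 1, |λ₂| ≤ 1, |λ₃| = 1, and |λ₁λ₂ − 1| < 1. Then |λ₂ − 1|² ≤ |λ₁λ₂ − 1|. -/
/-- Isosceles triangle: if `v b < v a` then `v (a + b) = v a`. -/
lemma na_add_eq_left {K : Type*} [Field K] (v : AbsoluteValue K ℝ)
    (hna : IsNonarchimedean v) {a b : K} (h : v b < v a) : v (a + b) = v a := by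
  apply le_antisymm
  · exact le_trans (hna a b) (max_le le_rfl h.le)
  · have h2 : v a = v ((a + b) + (-b)) := by ring_nf
    rw [h2]
    refine le_trans (hna _ _) (max_le le_rfl ?_)
    rw [v.map_neg]
    by_contra hc
    push_neg at hc
    have hle : v a ≤ max (v (a + b)) (v b) := by
      calc v a = v ((a + b) + (-b)) := h2
        _ ≤ max (v (a + b)) (v (-b)) := hna _ _
        _ = max (v (a + b)) (v b) := by rw [v.map_neg]
    rcases le_max_iff.mp hle with h' | h'
    · linarith
    · linarith

/-- If `λ₁, λ₂, λ₃` in a nonarchimedean valued field `K`, each different from `1`,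
satisfy the fixed-point residue formula, with `|λ₁| ≤ 1`, `|λ₂| ≤ 1`, `|λ₃| = 1`, and
`|λ₁λ₂ - 1| < 1`, then `|λ₂ - 1|² ≤ |λ₁λ₂ - 1|`. -/
theorem stmt_7 {K : Type*} [Field K] (v : AbsoluteValue K ℝ) (hna : IsNonarchimedean v)
    (l1 l2 l3 : K) (h1 : l1 ≠ 1) (h2 : l2 ≠ 1) (h3 : l3 ≠ 1)
    (hres : 1 / (1 - l1) + 1 / (1 - l2) + 1 / (1 - l3) = 1)
    (hb1 : v l1 ≤ 1) (hb2 : v l2 ≤ 1) (hb3 : v l3 = 1)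
    (hp : v (l1 * l2 - 1) < 1) :
    v (l2 - 1) ^ 2 ≤ v (l1 * l2 - 1) := by
  have n1 : (1 : K) - l1 ≠ 0 := sub_ne_zero.mpr (Ne.symm h1)
  have n2 : (1 : K) - l2 ≠ 0 := sub_ne_zero.mpr (Ne.symm h2)
  have n3 : (1 : K) - l3 ≠ 0 := sub_ne_zero.mpr (Ne.symm h3)
  -- key identity E1
  have E1 : (1 - l3) * (l1 * l2 - 1) = (1 - l1) * (1 - l2) := by
    field_simp at hres
    linear_combination -hres
  have np : l1 * l2 - 1 ≠ 0 := by
    intro h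
    rw [h, mul_zero] at E1
    exact mul_ne_zero n1 n2 E1.symm
  -- E2
  have E2 : l3 * (l1 * l2 - 1) = l1 + l2 - 2 := by
    have : (1 : K) * (l1 * l2 - 1) - l3 * (l1 * l2 - 1) = (1 - l1) * (1 - l2) := by
      linear_combination E1
    linear_combination (l1 * l2 - 1) * (1:K) - this - E1 + E1
  have v2le : v (l2 - 1) ≤ 1 := by
    have := hna l2 (-1)
    simpa using le_trans (le_of_eq (by ring_nf)) (this.trans (max_le hb2 (by simp)))
  have v3le : v (1 - l3) ≤ 1 := by
    have := hna 1 (-l3)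
    simpa [sub_eq_add_neg, hb3] using this
  by_cases hcase : v (1 - l2) ≤ v (1 - l1)
  · have key : v (1 - l1) * v (1 - l2) ≤ v (l1 * l2 - 1) := by
      have := congrArg v E1
      rw [v.map_mul, v.map_mul] at this
      rw [← this]
      have hpos : 0 ≤ v (l1 * l2 - 1) := v.nonneg _
      nlinarith [v.nonneg (1 - l3)]
    have : v (l2 - 1) = v (1 - l2) := by rw [← v.map_neg]; ring_nf
    rw [this, sq]
    calc v (1 - l2) * v (1 - l2) ≤ v (1 - l1) * v (1 - l2) := by
          nlinarith [v.nonneg (1 - l2)]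
      _ ≤ v (l1 * l2 - 1) := key
  · push_neg at hcase
    have hiso : v ((l2 - 1) + (l1 - 1)) = v (l2 - 1) := by
      apply na_add_eq_left v hna
      rwa [v.map_sub l1 1, v.map_sub l2 1]
    have heq : v (l2 - 1) = v (l1 * l2 - 1) := by
      have h1' : (l2 - 1) + (l1 - 1) = l3 * (l1 * l2 - 1) := by linear_combination -E2
      rw [h1'] at hiso
      rw [← hiso, v.map_mul, hb3, one_mul]
    rw [sq, heq]
    nlinarith [v.nonneg (l1 * l2 - 1), heq ▸ v2le]
end

section
/- Let K be a field equipped with a nonarchimedean absolute value |·|, and let λ₁, λ₂, λ₃ ∈ K, each different from 1, satisfy the fixed-point residue formula. Suppose |λ₁| > 1 and |λ₂ − 1| < 1. Set σ₁ = λ₁ + λ₂ + λ₃ and σ₂ = λ₁λ₂ + λ₁λ₃ + λ₂λ₃. Then |λ₃ − 1| < 1, |σ₁ − λ₁| < |λ₁|, and |σ₂ − 2λ₁| < |λ₁|. (Hence [σ₁ : σ₂ : 1] specializes to the boundary point [1 : 2 : 0] of the compactified moduli space; this is the potential additive reduction stratum (W3).) -/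
private lemma aux_add_eq {K : Type*} [Field K] (v : AbsoluteValue K ℝ)
    (hna : IsNonarchimedean v) {x y : K} (h : v y < v x) : v (x + y) = v x := by
  have h1 : v (x + y) ≤ max (v x) (v y) := hna x y
  have h2 : v x ≤ max (v (x + y)) (v y) := by
    have := hna (x + y) (-y)
    simpa using this
  rcases le_or_gt (v x) (v (x + y)) with hle | hlt
  · exact le_antisymm (h1.trans (max_le le_rfl h.le)) hle
  · exact absurd h2 (not_le.mpr (max_lt hlt h))

/-- potential additive reduction stratum (W3): If `λ₁, λ₂, λ₃`, each different
from `1`, satisfy the fixed-point residue formula, with `|λ₁| > 1` and `|λ₂ − 1| < 1`, then for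
`σ₁ = λ₁+λ₂+λ₃` and `σ₂ = λ₁λ₂+λ₁λ₃+λ₂λ₃` one has `|λ₃ − 1| < 1`, `|σ₁ − λ₁| < |λ₁|`, and
`|σ₂ − 2λ₁| < |λ₁|`. -/
theorem stmt_14 {K : Type*} [Field K] (v : AbsoluteValue K ℝ) (hna : IsNonarchimedean v)
    (l1 l2 l3 : K) (h1 : l1 ≠ 1) (h2 : l2 ≠ 1) (h3 : l3 ≠ 1)
    (hres : 1 / (1 - l1) + 1 / (1 - l2) + 1 / (1 - l3) = 1)
    (hr1 : 1 < v l1) (hr2 : v (l2 - 1) < 1)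
    (σ₁ σ₂ : K) (hσ₁ : σ₁ = l1 + l2 + l3) (hσ₂ : σ₂ = l1 * l2 + l1 * l3 + l2 * l3) :
    v (l3 - 1) < 1 ∧ v (σ₁ - l1) < v l1 ∧ v (σ₂ - 2 * l1) < v l1 := by
  have hne1 : (1 : K) - l1 ≠ 0 := sub_ne_zero.mpr (Ne.symm h1)
  have hne2 : (1 : K) - l2 ≠ 0 := sub_ne_zero.mpr (Ne.symm h2)
  have hne3 : (1 : K) - l3 ≠ 0 := sub_ne_zero.mpr (Ne.symm h3)
  have hv12 : v (1 - l2) = v (l2 - 1) := by rw [← v.map_neg]; ring_nf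
  have hv13 : v (1 - l3) = v (l3 - 1) := by rw [← v.map_neg]; ring_nf
  -- v (1 - l1) = v l1
  have hv11 : v (1 - l1) = v l1 := by
    have : v ((-l1) + 1) = v (-l1) := aux_add_eq v hna (by simpa using hr1)
    calc v (1 - l1) = v ((-l1) + 1) := by ring_nf
    _ = v (-l1) := this
    _ = v l1 := v.map_neg l1
  set a := 1 / (1 - l1) with ha
  set b := 1 / (1 - l2) with hb
  set c := 1 / (1 - l3) with hc
  have hb0 : v (1 - l2) ≠ 0 := fun h => hne2 (v.eq_zero.mp h)
  have hva : v a = (v l1)⁻¹ := by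
    rw [ha, one_div, map_inv₀, hv11]
  have hvb : v b = (v (l2 - 1))⁻¹ := by
    rw [hb, one_div, map_inv₀, hv12]
  have hvb1 : 1 < v b := by
    rw [hvb]
    have hpos : 0 < v (l2 - 1) := v.pos (sub_ne_zero.mpr h2)
    exact (one_lt_inv₀ hpos).mpr hr2
  have hva1 : v a < 1 := by
    rw [hva]
    exact inv_lt_one_of_one_lt₀ hr1
  have hvc : v c = v b := by
    have hceq : c = (-b) + (1 - a) := by
      have : a + b + c = 1 := hres
      linear_combination this
    rw [hceq, ← v.map_neg]
    have h1a : v (1 - a) ≤ 1 := by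
      have h := hna 1 (-a)
      rw [v.map_one, v.map_neg] at h
      calc v (1 - a) = v (1 + -a) := by rw [sub_eq_add_neg]
      _ ≤ max 1 (v a) := h
      _ ≤ 1 := max_le le_rfl hva1.le
    rw [show -((-b) + (1 - a)) = b + (a - 1) by ring]
    apply aux_add_eq v hna
    calc v (a - 1) = v (1 - a) := by rw [← v.map_neg]; ring_nf
    _ ≤ 1 := h1a
    _ < v b := hvb1
  have key3 : v (l3 - 1) = v (l2 - 1) := by
    have hvc' : v c = (v (1 - l3))⁻¹ := by rw [hc, one_div, map_inv₀]
    have : (v (1 - l3))⁻¹ = (v (l2 - 1))⁻¹ := by rw [← hvc', hvc, hvb]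
    have h3pos : 0 < v (1 - l3) := v.pos hne3
    have h2pos : 0 < v (l2 - 1) := v.pos (sub_ne_zero.mpr h2)
    rw [← hv13]
    exact inv_injective this
  have hl3 : v (l3 - 1) < 1 := key3 ▸ hr2
  have hvl2 : v l2 ≤ 1 := by
    have h := hna (l2 - 1) 1
    rw [v.map_one] at h
    simpa using h.trans (max_le hr2.le le_rfl)
  have hvl3 : v l3 ≤ 1 := by
    have h := hna (l3 - 1) 1
    rw [v.map_one] at h
    simpa using h.trans (max_le hl3.le le_rfl)
  refine ⟨hl3, ?_, ?_⟩
  · have : v (σ₁ - l1) = v (l2 + l3) := by rw [hσ₁]; ring_nf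
    rw [this]
    calc v (l2 + l3) ≤ max (v l2) (v l3) := hna l2 l3
    _ ≤ 1 := max_le hvl2 hvl3
    _ < v l1 := hr1
  · have heq : σ₂ - 2 * l1 = l1 * (l2 - 1) + (l1 * (l3 - 1) + l2 * l3) := by
      rw [hσ₂]; ring
    rw [heq]
    have t1 : v (l1 * (l2 - 1)) < v l1 := by
      rw [v.map_mul]
      calc v l1 * v (l2 - 1) < v l1 * 1 := by
            exact mul_lt_mul_of_pos_left hr2 (lt_trans one_pos hr1)
      _ = v l1 := mul_one _
    have t2 : v (l1 * (l3 - 1)) < v l1 := by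
      rw [v.map_mul]
      calc v l1 * v (l3 - 1) < v l1 * 1 := by
            exact mul_lt_mul_of_pos_left hl3 (lt_trans one_pos hr1)
      _ = v l1 := mul_one _
    have t3 : v (l2 * l3) < v l1 := by
      rw [v.map_mul]
      calc v l2 * v l3 ≤ 1 * 1 := mul_le_mul hvl2 hvl3 (v.nonneg _) one_pos.le
      _ = 1 := one_mul 1
      _ < v l1 := hr1
    calc v (l1 * (l2 - 1) + (l1 * (l3 - 1) + l2 * l3))
        ≤ max (v (l1 * (l2 - 1))) (v (l1 * (l3 - 1) + l2 * l3)) := hna _ _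
    _ ≤ max (v (l1 * (l2 - 1))) (max (v (l1 * (l3 - 1))) (v (l2 * l3))) := by
        exact max_le_max le_rfl (hna _ _)
    _ < v l1 := max_lt t1 (max_lt t2 t3)
end
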